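/- For every z ∈ C and every q ∈ C with 0 < |q| < 1, the third Jacobi theta function has the product representation Σ_{n∈Z} q^{n²} e^{2inz} = ∏_{n=1}^∞ (1 − q^{2n})(1 + 2q^{2n−1}cos(2z) + q^{4n−2}). -/

import Mathlib

set_option maxHeartbeats 1000000

open Finset Complex Filter Topology

namespace JTP3aux

noncomputable def phi (Q : ℂ) (k : ℕ) : ℂ := ∏ j ∈ Finset.range k, (1 - Q ^ (j+1))

noncomputable def Phi (Q : ℂ) (k : ℤ) : ℂ := if 0 ≤ k then phi Q k.toNat else 0

noncomputable def gc (Q : ℂ) (N : ℕ) (m : ℤ) : ℂ :=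
  Phi Q (2*N) / (Phi Q ((N:ℤ)+m) * Phi Q ((N:ℤ)-m))

lemma phi_succ (Q : ℂ) (k : ℕ) : phi Q (k+1) = phi Q k * (1 - Q ^ (k+1)) :=
  Finset.prod_range_succ _ _

lemma one_sub_pow_ne (Q : ℂ) (hQ : ‖Q‖ < 1) (j : ℕ) : (1 : ℂ) - Q ^ (j+1) ≠ 0 := by
  intro h
  have h2 : Q ^ (j+1) = 1 := by linear_combination -h
  have : ‖Q ^ (j+1)‖ < 1 := by
    rw [norm_pow]
    calc ‖Q‖ ^ (j+1) ≤ ‖Q‖ ^ 1 := by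
          apply pow_le_pow_of_le_one (norm_nonneg _) hQ.le
          omega
      _ < 1 := by simpa using hQ
  rw [h2] at this; simp at this

lemma phi_ne (Q : ℂ) (hQ : ‖Q‖ < 1) (k : ℕ) : phi Q k ≠ 0 :=
  Finset.prod_ne_zero_iff.2 fun j _ => one_sub_pow_ne Q hQ j

lemma Phi_ofNat (Q : ℂ) (k : ℕ) : Phi Q (k : ℤ) = phi Q k := by
  simp [Phi]

lemma Phi_neg (Q : ℂ) {k : ℤ} (h : k < 0) : Phi Q k = 0 := by
  simp [Phi, not_le.2 h]

lemma gc_eq_zero (Q : ℂ) {N : ℕ} {m : ℤ} (h : (N : ℤ) < m.natAbs) : gc Q N m = 0 := by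
  rcases le_or_gt 0 m with hm | hm
  · have : (N:ℤ) - m < 0 := by omega
    rw [gc, Phi_neg Q this, mul_zero, div_zero]
  · have : (N:ℤ) + m < 0 := by omega
    rw [gc, Phi_neg Q this, zero_mul, div_zero]


lemma gc_neg (Q : ℂ) (N : ℕ) (m : ℤ) : gc Q N (-m) = gc Q N m := by
  rw [gc, gc, show (N:ℤ) + -m = N - m by ring, show (N:ℤ) - -m = N + m by ring, mul_comm (Phi Q ((N:ℤ) - m))]

lemma gc_ofNat (Q : ℂ) (N : ℕ) (m : ℤ) (a b : ℕ) (ha : (N:ℤ) + m = a) (hb : (N:ℤ) - m = b) :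
    gc Q N m = phi Q (2*N) / (phi Q a * phi Q b) := by
  rw [gc, ha, hb, show (2*(N:ℤ)) = ((2*N : ℕ) : ℤ) by push_cast; ring,
    Phi_ofNat, Phi_ofNat, Phi_ofNat]

lemma frac_key (A X Y x x2 y y2 u u2 c1 c2 c3 : ℂ) (hX : X ≠ 0) (hY : Y ≠ 0)
    (hx : x ≠ 0) (hx2 : x2 ≠ 0) (hy : y ≠ 0) (hy2 : y2 ≠ 0)
    (h : u * u2 = c1 * (x2 * y2) + c2 * (x * x2) + c3 * (y * y2)) :
    A * (u * u2) / (X * x * x2 * (Y * y * y2)) =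
      A / (X * x * (Y * y)) * c1 + c2 * (A / (X * (Y * y * y2)))
        + c3 * (A / (X * x * x2 * Y)) := by
  have hD1 : X * x * (Y * y) ≠ 0 := by simp [hX, hx, hY, hy]
  have hD2 : X * (Y * y * y2) ≠ 0 := by simp [hX, hY, hy, hy2]
  have hD3 : X * x * x2 * Y ≠ 0 := by simp [hX, hx, hx2, hY]
  have hD : X * x * x2 * (Y * y * y2) ≠ 0 := by simp [hX, hx, hx2, hY, hy, hy2]
  rw [div_mul_eq_mul_div, mul_div_assoc' c2, mul_div_assoc' c3, div_add_div _ _ hD1 hD2, div_add_div _ _ (mul_ne_zero hD1 hD2) hD3,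
    div_eq_div_iff hD (mul_ne_zero (mul_ne_zero hD1 hD2) hD3)]
  linear_combination (A * ((X * x * (Y * y)) * (X * (Y * y * y2)) * (X * x * x2 * Y))) * h

lemma gc_rec_nonneg (Q : ℂ) (hQ : ‖Q‖ < 1) (N : ℕ) (m : ℤ) (hm : 0 ≤ m) :
    gc Q (N+1) m = gc Q N m * (1 + Q ^ (2*N+1))
      + Q ^ ((N:ℤ)+1-m) * gc Q N (m-1) + Q ^ ((N:ℤ)+1+m) * gc Q N (m+1) := by
  rcases lt_trichotomy m (N:ℤ) with hc | hc | hc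
  · -- interior: 0 ≤ m ≤ N-1
    obtain ⟨b', hb'⟩ : ∃ b' : ℕ, (N:ℤ) - m = (b' : ℤ) + 1 := ⟨((N:ℤ) - m - 1).toNat, by omega⟩
    obtain ⟨a', ha'⟩ : ∃ a' : ℕ, (N:ℤ) + m = (a' : ℤ) + 1 := ⟨((N:ℤ) + m - 1).toNat, by omega⟩
    have h2N : 2*N = a' + b' + 2 := by omega
    rw [gc_ofNat Q (N+1) m (a'+2) (b'+2) (by push_cast; omega) (by push_cast; omega),
        gc_ofNat Q N m (a'+1) (b'+1) (by push_cast; omega) (by push_cast; omega),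
        gc_ofNat Q N (m-1) a' (b'+2) (by push_cast; omega) (by push_cast; omega),
        gc_ofNat Q N (m+1) (a'+2) b' (by push_cast; omega) (by push_cast; omega),
        show (N:ℤ)+1-m = ((b'+2 : ℕ) : ℤ) by push_cast; omega,
        show (N:ℤ)+1+m = ((a'+2 : ℕ) : ℤ) by push_cast; omega,
        zpow_natCast, zpow_natCast]
    rw [show 2*(N+1) = (2*N+1)+1 by ring, phi_succ Q (2*N+1), phi_succ Q (2*N),
        show a'+2 = (a'+1)+1 from rfl, phi_succ Q (a'+1), phi_succ Q a',
        show b'+2 = (b'+1)+1 from rfl, phi_succ Q (b'+1), phi_succ Q b']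
    rw [show phi Q (2*N) * (1 - Q ^ (2*N+1)) * (1 - Q ^ (2*N+1+1))
          = phi Q (2*N) * ((1 - Q ^ (2*N+1)) * (1 - Q ^ (2*N+1+1))) by ring]
    rw [frac_key (phi Q (2*N)) (phi Q a') (phi Q b') _ _ _ _ _ _
        (1 + Q ^ (2*N+1)) (Q^(b'+2)) (Q^(a'+2))
        (phi_ne Q hQ a') (phi_ne Q hQ b') (one_sub_pow_ne Q hQ a') (one_sub_pow_ne Q hQ (a'+1))
        (one_sub_pow_ne Q hQ b') (one_sub_pow_ne Q hQ (b'+1)) ?_]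
    rw [h2N]
    ring
  · -- m = N
    rcases Nat.eq_zero_or_pos N with rfl | hN
    · -- N = 0, m = 0
      have hm0 : m = 0 := by omega
      subst hm0
      rw [gc_ofNat Q 1 0 1 1 (by norm_num) (by norm_num),
          gc_ofNat Q 0 0 0 0 (by norm_num) (by norm_num),
          gc_eq_zero Q (N := 0) (m := 0-1) (by norm_num), gc_eq_zero Q (N := 0) (m := 0+1) (by norm_num)]
      have n1 : (1:ℂ) - Q ≠ 0 := by simpa using one_sub_pow_ne Q hQ 0
      simp only [phi]
      norm_num [Finset.prod_range_succ]
      field_simp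
      ring
    · -- N ≥ 1, m = N
      obtain ⟨N', rfl⟩ : ∃ N', N = N' + 1 := ⟨N - 1, by omega⟩
      subst hc
      push_cast
      rw [gc_ofNat Q (N'+1+1) ((N':ℤ)+1) (2*N'+3) 1 (by push_cast; omega) (by push_cast; omega),
          gc_ofNat Q (N'+1) ((N':ℤ)+1) (2*N'+2) 0 (by push_cast; omega) (by push_cast; omega),
          gc_ofNat Q (N'+1) ((N':ℤ)+1-1) (2*N'+1) 1 (by push_cast; omega) (by push_cast; omega),
          gc_eq_zero Q (N := N'+1) (m := (N':ℤ)+1+1)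
            (by rw [show (N':ℤ)+1+1 = ((N'+2:ℕ):ℤ) by push_cast; ring, Int.natAbs_natCast]
                push_cast; omega),
          show (N':ℤ)+1+1-((N':ℤ)+1) = ((1:ℕ):ℤ) by push_cast; omega,
          show (N':ℤ)+1+1+((N':ℤ)+1) = ((2*N'+3:ℕ):ℤ) by push_cast; omega,
          zpow_natCast, zpow_natCast]
      have h0 : phi Q 0 = 1 := by simp [phi]
      have h1 : phi Q 1 = 1 - Q ^ 1 := by simp [phi]
      have hp : (1:ℂ) - Q ^ 1 ≠ 0 := one_sub_pow_ne Q hQ 0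
      rw [h0, mul_one, show 2*(N'+1) = 2*N'+2 by ring, div_self (phi_ne Q hQ (2*N'+2)), one_mul]
      rw [show 2*(N'+1+1) = (2*N'+3)+1 by ring, phi_succ Q (2*N'+3),
          show 2*N'+3 = (2*N'+2)+1 from rfl, phi_succ Q (2*N'+2),
          show 2*N'+2 = (2*N'+1)+1 from rfl, phi_succ Q (2*N'+1), h1]
      rw [show phi Q (2*N'+1) * (1 - Q ^ (2*N'+1+1)) * (1 - Q ^ (2*N'+2+1)) * (1 - Q ^ (2*N'+3+1))
            / (phi Q (2*N'+1) * (1 - Q ^ (2*N'+1+1)) * (1 - Q ^ (2*N'+2+1)) * (1 - Q ^ 1))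
          = (1 - Q ^ (2*N'+3+1)) / (1 - Q ^ 1) from
        mul_div_mul_left _ _ (by
          exact mul_ne_zero (mul_ne_zero (phi_ne Q hQ _) (one_sub_pow_ne Q hQ (2*N'+1)))
            (one_sub_pow_ne Q hQ (2*N'+2)))]
      rw [show phi Q (2*N'+1) * (1 - Q ^ (2*N'+1+1)) / (phi Q (2*N'+1) * (1 - Q ^ 1))
          = (1 - Q ^ (2*N'+1+1)) / (1 - Q ^ 1) from mul_div_mul_left _ _ (phi_ne Q hQ _)]
      rw [mul_zero, add_zero,
          show (1:ℂ) - Q^(2*N'+3+1) = (1+Q^(2*(N'+1)+1))*(1-Q^1) + Q^1*(1-Q^(2*N'+1+1)) by ring,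
          add_div, mul_div_cancel_right₀ _ hp, mul_div_assoc,
          show 2*N'+1+1+1 = 2*(N'+1)+1 by ring]
  · rcases lt_trichotomy m ((N:ℤ)+1) with hc2 | hc2 | hc2
    · omega
    · -- m = N + 1
      subst hc2
      rw [gc_ofNat Q (N+1) ((N:ℤ)+1) (2*N+2) 0 (by push_cast; omega) (by push_cast; omega),
          gc_eq_zero Q (N := N) (m := (N:ℤ)+1) (by omega),
          gc_ofNat Q N ((N:ℤ)+1-1) (2*N) 0 (by push_cast; omega) (by push_cast; omega),
          gc_eq_zero Q (N := N) (m := (N:ℤ)+1+1) (by omega)]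
      have h0 : phi Q 0 = 1 := by simp [phi]
      rw [h0, show (N:ℤ)+1-((N:ℤ)+1) = ((0:ℕ):ℤ) by omega, zpow_natCast]
      simp only [mul_one]
      rw [show 2*(N+1) = 2*N+2 by ring, div_self (phi_ne Q hQ _), div_self (phi_ne Q hQ _)]
      ring
    · -- m ≥ N+2 : everything vanishes
      have h1 : gc Q (N+1) m = 0 := gc_eq_zero Q (by omega)
      have h2 : gc Q N m = 0 := gc_eq_zero Q (by omega)
      have h3 : gc Q N (m-1) = 0 := gc_eq_zero Q (by omega)
      have h4 : gc Q N (m+1) = 0 := gc_eq_zero Q (by omega)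
      rw [h1, h2, h3, h4]; ring

lemma gc_rec (Q : ℂ) (hQ : ‖Q‖ < 1) (N : ℕ) (m : ℤ) :
    gc Q (N+1) m = gc Q N m * (1 + Q ^ (2*N+1))
      + Q ^ ((N:ℤ)+1-m) * gc Q N (m-1) + Q ^ ((N:ℤ)+1+m) * gc Q N (m+1) := by
  rcases le_or_gt 0 m with hm | hm
  · exact gc_rec_nonneg Q hQ N m hm
  · have h := gc_rec_nonneg Q hQ N (-m) (by omega)
    rw [show -m - 1 = -(m+1) by ring, show -m + 1 = -(m-1) by ring,
        gc_neg, gc_neg, gc_neg, gc_neg,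
        show (N:ℤ)+1-(-m) = (N:ℤ)+1+m by ring, show (N:ℤ)+1+(-m) = (N:ℤ)+1-m by ring] at h
    rw [h]; ring

/-- sums of a function vanishing outside `[-N, N]` agree on all larger boxes -/
lemma sum_box (f : ℤ → ℂ) (N : ℕ) (hf : ∀ m : ℤ, (N:ℤ) < m.natAbs → f m = 0)
    {a b : ℤ} (ha : a ≤ -(N:ℤ)) (hb : (N:ℤ) ≤ b) :
    ∑ m ∈ Finset.Icc a b, f m = ∑ m ∈ Finset.Icc (-(N:ℤ)) N, f m := by
  apply (Finset.sum_subset (Finset.Icc_subset_Icc ha hb) ?_).symm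
  intro x hx hx2
  apply hf
  simp only [Finset.mem_Icc] at hx hx2
  omega

lemma sum_shift (f : ℤ → ℂ) (a b c : ℤ) :
    ∑ m ∈ Finset.Icc a b, f (m + c) = ∑ m ∈ Finset.Icc (a+c) (b+c), f m := by
  rw [← Finset.map_add_right_Icc a b c, Finset.sum_map]
  rfl

lemma q_zpow_collect (q : ℂ) (hq : q ≠ 0) (e : ℤ) (f : ℤ) :
    ((q^2) : ℂ) ^ e * q ^ f = q ^ (2*e + f) := by
  rw [← zpow_natCast q 2, ← zpow_mul, ← zpow_add₀ hq]
  norm_num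

lemma finite_jtp (q w : ℂ) (hq : q ≠ 0) (hw : w ≠ 0) (hQ : ‖(q^2 : ℂ)‖ < 1) (N : ℕ) :
    ∏ j ∈ Finset.range N, ((1 + q^(2*j+1) * w) * (1 + q^(2*j+1) * w⁻¹))
      = ∑ m ∈ Finset.Icc (-(N:ℤ)) N, gc (q^2) N m * q ^ (m^2) * w ^ m := by
  induction N with
  | zero =>
    rw [Finset.range_zero, Finset.prod_empty]
    rw [show (-(0:ℕ):ℤ) = 0 by norm_num, Nat.cast_zero, Finset.Icc_self, Finset.sum_singleton]
    rw [gc_ofNat (q^2) 0 0 0 0 (by norm_num) (by norm_num)]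
    simp [phi]
  | succ N ih =>
    set Q : ℂ := q^2 with hQdef
    have hsupp : ∀ m : ℤ, (N:ℤ) < m.natAbs → gc Q N m * q ^ (m^2) * w ^ m = 0 := by
      intro m hm; rw [gc_eq_zero Q hm, zero_mul, zero_mul]
    -- rewrite RHS using the recurrence
    have hrec : ∀ m ∈ Finset.Icc (-(N+1:ℕ):ℤ) (N+1:ℕ),
        gc Q (N+1) m * q ^ (m^2) * w ^ m
          = (1 + Q^(2*N+1)) * (gc Q N m * q ^ (m^2) * w ^ m)
            + (q^(2*N+1) * w) * (gc Q N (m-1) * q ^ ((m-1)^2) * w ^ (m-1))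
            + (q^(2*N+1) * w⁻¹) * (gc Q N (m+1) * q ^ ((m+1)^2) * w ^ (m+1)) := by
      intro m _
      rw [gc_rec Q hQ N m]
      have e2 : Q ^ ((N:ℤ)+1-m) * gc Q N (m-1) * q ^ (m^2) * w ^ m
          = (q^(2*N+1) * w) * (gc Q N (m-1) * q ^ ((m-1)^2) * w ^ (m-1)) := by
        have hql : Q ^ ((N:ℤ)+1-m) * q ^ (m^2) = q ^ ((2*N+1 : ℕ) : ℤ) * q ^ ((m-1)^2) := by
          rw [hQdef, q_zpow_collect q hq, ← zpow_add₀ hq]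
          congr 1
          push_cast; ring
        have hwl : w ^ m = w * w ^ (m-1) := by
          rw [← zpow_one_add₀ hw]; congr 1; ring
        rw [zpow_natCast] at hql
        calc Q ^ ((N:ℤ)+1-m) * gc Q N (m-1) * q ^ (m^2) * w ^ m
            = (Q ^ ((N:ℤ)+1-m) * q ^ (m^2)) * gc Q N (m-1) * w ^ m := by ring
          _ = (q ^ (2*N+1) * q ^ ((m-1)^2)) * gc Q N (m-1) * (w * w ^ (m-1)) := by
              rw [hql, hwl]
          _ = (q^(2*N+1) * w) * (gc Q N (m-1) * q ^ ((m-1)^2) * w ^ (m-1)) := by ring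
      have e3 : Q ^ ((N:ℤ)+1+m) * gc Q N (m+1) * q ^ (m^2) * w ^ m
          = (q^(2*N+1) * w⁻¹) * (gc Q N (m+1) * q ^ ((m+1)^2) * w ^ (m+1)) := by
        have hql : Q ^ ((N:ℤ)+1+m) * q ^ (m^2) = q ^ ((2*N+1 : ℕ) : ℤ) * q ^ ((m+1)^2) := by
          rw [hQdef, q_zpow_collect q hq, ← zpow_add₀ hq]
          congr 1
          push_cast; ring
        have hwl : w ^ m = w⁻¹ * w ^ (m+1) := by
          rw [← zpow_neg_one, ← zpow_add₀ hw]; congr 1; ring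
        rw [zpow_natCast] at hql
        calc Q ^ ((N:ℤ)+1+m) * gc Q N (m+1) * q ^ (m^2) * w ^ m
            = (Q ^ ((N:ℤ)+1+m) * q ^ (m^2)) * gc Q N (m+1) * w ^ m := by ring
          _ = (q ^ (2*N+1) * q ^ ((m+1)^2)) * gc Q N (m+1) * (w⁻¹ * w ^ (m+1)) := by
              rw [hql, hwl]
          _ = (q^(2*N+1) * w⁻¹) * (gc Q N (m+1) * q ^ ((m+1)^2) * w ^ (m+1)) := by ring
      rw [← e2, ← e3]
      ring
    rw [Finset.sum_congr rfl hrec, Finset.sum_add_distrib, Finset.sum_add_distrib,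
        ← Finset.mul_sum, ← Finset.mul_sum, ← Finset.mul_sum]
    -- shift sums
    have hs2 : ∑ m ∈ Finset.Icc (-(N+1:ℕ):ℤ) (N+1:ℕ), (gc Q N (m-1) * q ^ ((m-1)^2) * w ^ (m-1))
        = ∑ m ∈ Finset.Icc (-(N:ℕ):ℤ) (N:ℕ), (gc Q N m * q ^ (m^2) * w ^ m) := by
      have := sum_shift (fun m => gc Q N m * q ^ (m^2) * w ^ m) (-(N+1:ℕ):ℤ) (N+1:ℕ) (-1)
      simp only [show ∀ m : ℤ, m + -1 = m - 1 from fun m => by ring] at this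
      rw [this]
      exact sum_box _ N hsupp (by push_cast; omega) (by push_cast; omega)
    have hs3 : ∑ m ∈ Finset.Icc (-(N+1:ℕ):ℤ) (N+1:ℕ), (gc Q N (m+1) * q ^ ((m+1)^2) * w ^ (m+1))
        = ∑ m ∈ Finset.Icc (-(N:ℕ):ℤ) (N:ℕ), (gc Q N m * q ^ (m^2) * w ^ m) := by
      rw [sum_shift (fun m => gc Q N m * q ^ (m^2) * w ^ m) (-(N+1:ℕ):ℤ) (N+1:ℕ) 1]
      exact sum_box _ N hsupp (by push_cast; omega) (by push_cast; omega)
    have hs1 : ∑ m ∈ Finset.Icc (-(N+1:ℕ):ℤ) (N+1:ℕ), (gc Q N m * q ^ (m^2) * w ^ m)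
        = ∑ m ∈ Finset.Icc (-(N:ℕ):ℤ) (N:ℕ), (gc Q N m * q ^ (m^2) * w ^ m) :=
      sum_box _ N hsupp (by push_cast; omega) (by push_cast; omega)
    rw [hs1, hs2, hs3, ← ih, Finset.prod_range_succ]
    have hQ41 : (1 : ℂ) + Q^(2*N+1) = 1 + q^(4*N+2) := by
      rw [hQdef, ← pow_mul]; ring_nf
    rw [hQ41]
    field_simp
    ring

lemma hasProd_aux {f : ℕ → ℂ} (hf : Summable fun n => ‖f n‖) (hne : ∀ n, 1 + f n ≠ 0) :
    HasProd (fun n => 1 + f n) (∏' n, (1 + f n)) ∧ (∏' n, (1 + f n)) ≠ 0 := by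
  have hlog : Summable fun n => Complex.log (1 + f n) := by
    have h0 : Tendsto (fun n => ‖f n‖) atTop (𝓝 0) := hf.tendsto_atTop_zero
    apply Summable.of_norm_bounded_eventually_nat (hf.mul_left (3/2))
    filter_upwards [h0.eventually (eventually_le_nhds (by norm_num : (0:ℝ) < 1/2))] with n hn
    exact Complex.norm_log_one_add_half_le_self hn
  constructor
  · rw [← Complex.cexp_tsum_eq_tprod hne hlog]
    exact Complex.hasProd_of_hasSum_log hne hlog.hasSum
  · have := Complex.cexp_tsum_eq_tprod hne hlog
    rw [← this]
    exact Complex.exp_ne_zero _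

/-- summability of `C * r^(n²) * s^n`-type bounds over ℤ -/
lemma summable_theta_bound (r s : ℝ) (hr0 : 0 < r) (hr : r < 1) (hs : 0 < s) :
    Summable (fun m : ℤ => r ^ (m.natAbs ^ 2) * s ^ m.natAbs) := by
  have hnat : Summable (fun n : ℕ => r ^ (n ^ 2) * s ^ n) := by
    apply summable_of_ratio_norm_eventually_le (r := 1/2) (by norm_num)
    have hto : Tendsto (fun n : ℕ => r ^ (2*n+1) * s) atTop (𝓝 0) := by
      have : Tendsto (fun n : ℕ => r ^ n) atTop (𝓝 0) :=
        tendsto_pow_atTop_nhds_zero_of_lt_one hr0.le hr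
      have h2 : Tendsto (fun n : ℕ => 2*n+1) atTop atTop := by
        apply tendsto_atTop_atTop.2
        intro b; exact ⟨b, fun a ha => by omega⟩
      simpa using (this.comp h2).mul_const s
    filter_upwards [hto.eventually (eventually_le_nhds (by norm_num : (0:ℝ) < 1/2))] with n hn
    have hterm : ∀ k : ℕ, |r ^ (k^2) * s ^ k| = r ^ (k^2) * s ^ k := fun k =>
      abs_of_nonneg (by positivity)
    rw [Real.norm_eq_abs, Real.norm_eq_abs, hterm, hterm]
    have : r ^ ((n+1)^2) * s ^ (n+1) = (r ^ (2*n+1) * s) * (r ^ (n^2) * s ^ n) := by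
      rw [show (n+1)^2 = n^2 + (2*n+1) by ring, pow_add, pow_succ]
      ring
    rw [this]
    apply mul_le_mul_of_nonneg_right hn (by positivity)
  apply Summable.of_nat_of_neg <;> simpa using hnat

lemma phi_bounds (Q : ℂ) (hQ : ‖Q‖ < 1) :
    ∃ ε B : ℝ, 0 < ε ∧ ∀ k, ε ≤ ‖phi Q k‖ ∧ ‖phi Q k‖ ≤ B := by
  set r := ‖Q‖ with hr
  have hr0 : 0 ≤ r := norm_nonneg _
  have h1r : 0 < 1 - r := by linarith
  set c : ℝ := (1-r)⁻¹ with hc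
  have hc0 : 0 < c := by positivity
  -- partial geometric sums are bounded
  have hsum : ∀ k : ℕ, ∑ j ∈ Finset.range k, r^(j+1) ≤ r/(1-r) := by
    intro k
    have hs : Summable (fun j : ℕ => r^(j+1)) := by
      apply Summable.comp_injective (summable_geometric_of_lt_one hr0 hQ)
      exact fun a b h => by omega
    calc ∑ j ∈ Finset.range k, r^(j+1) ≤ ∑' j : ℕ, r^(j+1) :=
          hs.sum_le_tsum _ (fun j _ => by positivity)
      _ = r * ∑' j : ℕ, r^j := by
          rw [← tsum_mul_left]
          congr 1; funext j; rw [pow_succ]; ring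
      _ = r * (1-r)⁻¹ := by rw [tsum_geometric_of_lt_one hr0 hQ]
      _ = r/(1-r) := by rw [div_eq_mul_inv]
  have hxr : ∀ j : ℕ, r ^ (j+1) ≤ r := fun j => by
    calc r^(j+1) ≤ r^1 := pow_le_pow_of_le_one hr0 hQ.le (by omega)
      _ = r := pow_one r
  refine ⟨Real.exp (-(c * (r/(1-r)))), Real.exp (r/(1-r)), Real.exp_pos _, fun k => ?_⟩
  have hnorm : ‖phi Q k‖ = ∏ j ∈ Finset.range k, ‖(1:ℂ) - Q ^ (j+1)‖ := by
    rw [phi, norm_prod]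
  constructor
  · -- lower bound
    rw [hnorm]
    have hfac : ∀ j ∈ Finset.range k, Real.exp (-(c * r^(j+1))) ≤ ‖(1:ℂ) - Q ^ (j+1)‖ := by
      intro j _
      have hx : r^(j+1) ≤ r := hxr j
      have hx0 : 0 ≤ r^(j+1) := by positivity
      have key : Real.exp (-(c * r^(j+1))) ≤ 1 - r^(j+1) := by
        have h1 : 1 + c * r^(j+1) ≤ Real.exp (c * r^(j+1)) := by
          have := Real.add_one_le_exp (c * r^(j+1)); linarith
        have h2 : (1:ℝ) ≤ (1 - r^(j+1)) * (1 + c * r^(j+1)) := by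
          have hcr : c * (1 - r) = 1 := by
            rw [hc]; exact inv_mul_cancel₀ (by linarith)
          nlinarith [mul_nonneg (mul_nonneg hc0.le hx0) (sub_nonneg.2 hx)]
        have hpos : (0:ℝ) < 1 + c * r^(j+1) := by positivity
        rw [Real.exp_neg]
        rw [inv_le_iff_one_le_mul₀ (lt_of_lt_of_le (by positivity) h1)]
        calc (1:ℝ) ≤ (1 - r^(j+1)) * (1 + c * r^(j+1)) := h2
          _ ≤ (1 - r^(j+1)) * Real.exp (c * r^(j+1)) := by
              apply mul_le_mul_of_nonneg_left h1 (by linarith)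
      calc Real.exp (-(c * r^(j+1))) ≤ 1 - r^(j+1) := key
        _ = ‖(1:ℂ)‖ - ‖Q^(j+1)‖ := by rw [norm_one, norm_pow]
        _ ≤ ‖(1:ℂ) - Q^(j+1)‖ := norm_sub_norm_le _ _
    calc Real.exp (-(c * (r/(1-r))))
        ≤ Real.exp (∑ j ∈ Finset.range k, -(c * r^(j+1))) := by
          apply Real.exp_le_exp.2
          have : ∑ j ∈ Finset.range k, -(c * r^(j+1)) = -(c * ∑ j ∈ Finset.range k, r^(j+1)) := by
            rw [Finset.mul_sum, ← Finset.sum_neg_distrib]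
          rw [this]
          have := mul_le_mul_of_nonneg_left (hsum k) hc0.le
          linarith
      _ = ∏ j ∈ Finset.range k, Real.exp (-(c * r^(j+1))) := by rw [Real.exp_sum]
      _ ≤ ∏ j ∈ Finset.range k, ‖(1:ℂ) - Q ^ (j+1)‖ :=
          Finset.prod_le_prod (fun j _ => (Real.exp_pos _).le) hfac
  · -- upper bound
    rw [hnorm]
    calc ∏ j ∈ Finset.range k, ‖(1:ℂ) - Q ^ (j+1)‖
        ≤ ∏ j ∈ Finset.range k, Real.exp (r^(j+1)) := by
          apply Finset.prod_le_prod (fun j _ => norm_nonneg _)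
          intro j _
          calc ‖(1:ℂ) - Q^(j+1)‖ ≤ ‖(1:ℂ)‖ + ‖Q^(j+1)‖ := norm_sub_le _ _
            _ = 1 + r^(j+1) := by rw [norm_one, norm_pow]
            _ ≤ Real.exp (r^(j+1)) := by
                have := Real.add_one_le_exp (r^(j+1)); linarith
      _ = Real.exp (∑ j ∈ Finset.range k, r^(j+1)) := (Real.exp_sum _ _).symm
      _ ≤ Real.exp (r/(1-r)) := Real.exp_le_exp.2 (hsum k)

end JTP3aux

/-- The Jacobi triple product representation of the third Jacobi theta function:
`Σ_{n∈ℤ} q^{n²} e^{2inz} = ∏_{n≥1} (1-q^{2n})(1+2q^{2n-1}cos(2z)+q^{4n-2})`. -/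
theorem jacobi_triple_product_theta3 (z q : ℂ) (h0 : 0 < ‖q‖)
    (h1 : ‖q‖ < 1) :
    (∑' n : ℤ, q ^ (n ^ 2) * Complex.exp (2 * Complex.I * (n : ℂ) * z)) =
      ∏' n : ℕ, ((1 - q ^ (2 * n + 2)) *
        (1 + 2 * q ^ (2 * n + 1) * Complex.cos (2 * z) + q ^ (4 * n + 2))) := by
  open JTP3aux in
  have hr0 : 0 < ‖q‖ := h0
  have hr1 : ‖q‖ < 1 := h1
  have hq : q ≠ 0 := norm_pos_iff.mp hr0
  set r : ℝ := ‖q‖ with hrdef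
  set w : ℂ := Complex.exp (2 * Complex.I * z) with hwdef
  have hw0 : w ≠ 0 := Complex.exp_ne_zero _
  set Q : ℂ := q ^ 2 with hQdef
  have hQ : ‖Q‖ < 1 := by
    rw [hQdef, norm_pow]
    nlinarith [norm_nonneg q]
  -- rewrite the left-hand side
  have hLHS : (∑' n : ℤ, q ^ (n ^ 2) * Complex.exp (2 * Complex.I * (n : ℂ) * z))
      = ∑' m : ℤ, q ^ (m ^ 2) * w ^ m := by
    apply tsum_congr; intro n
    congr 1
    rw [hwdef, ← Complex.exp_int_mul]
    congr 1; push_cast; ring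
  rw [hLHS]
  -- bounds on phi
  obtain ⟨ε, B, hε, hb⟩ := phi_bounds Q hQ
  have hεB : ε ≤ B := le_trans (hb 0).1 (hb 0).2
  have hB0 : 0 < B := lt_of_lt_of_le hε hεB
  -- the infinite product A of (1 - Q^(n+1))
  have hfA : Summable (fun n : ℕ => ‖-(Q ^ (n+1))‖) := by
    have : Summable (fun n : ℕ => ‖Q‖ ^ (n+1)) :=
      (summable_geometric_of_lt_one (norm_nonneg Q) hQ).comp_injective
        (fun a b hab => by omega)
    apply this.congr
    intro n; rw [norm_neg]; exact (norm_pow _ _).symm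
  have hneA : ∀ n : ℕ, (1:ℂ) + -(Q ^ (n+1)) ≠ 0 := fun n => by
    have := one_sub_pow_ne Q hQ n
    rw [sub_eq_add_neg] at this; exact this
  obtain ⟨hPA, hA0⟩ := hasProd_aux hfA hneA
  set A := ∏' n : ℕ, ((1:ℂ) + -(Q ^ (n+1))) with hAdef
  have hphiA : Tendsto (fun N => phi Q N) atTop (𝓝 A) := by
    apply hPA.tendsto_prod_nat.congr
    intro n
    rw [phi]
    exact Finset.prod_congr rfl (fun j _ => by rw [sub_eq_add_neg])
  -- pointwise limit of the coefficients
  have hd : ∀ m : ℤ, Tendsto (fun N : ℕ => phi Q N * gc Q N m) atTop (𝓝 1) := by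
    intro m
    have h2N : Tendsto (fun N : ℕ => phi Q (2*N)) atTop (𝓝 A) :=
      hphiA.comp (tendsto_atTop_atTop.2 fun b => ⟨b, fun a ha => by omega⟩)
    have hplus : Tendsto (fun N : ℕ => phi Q (((N:ℤ) + m).toNat)) atTop (𝓝 A) :=
      hphiA.comp (tendsto_atTop_atTop.2 fun b => ⟨b + m.natAbs, fun a ha => by omega⟩)
    have hminus : Tendsto (fun N : ℕ => phi Q (((N:ℤ) - m).toNat)) atTop (𝓝 A) :=
      hphiA.comp (tendsto_atTop_atTop.2 fun b => ⟨b + m.natAbs, fun a ha => by omega⟩)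
    have hAA : A * A ≠ 0 := mul_ne_zero hA0 hA0
    have hT := ((hphiA.mul h2N).div (hplus.mul hminus) hAA)
    rw [div_self hAA] at hT
    apply hT.congr'
    filter_upwards [eventually_ge_atTop m.natAbs] with N hN
    simp only [Pi.div_apply]
    rw [gc_ofNat Q N m (((N:ℤ)+m).toNat) (((N:ℤ)-m).toNat) (by omega) (by omega),
      mul_div_assoc]
  -- uniform bound on the coefficients
  set s : ℝ := max ‖w‖ ‖w⁻¹‖ with hsdef
  have hs0 : 0 < s := lt_max_of_lt_left (norm_pos_iff.mpr hw0)
  set C : ℝ := B * B / (ε * ε) with hCdef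
  have hC0 : 0 ≤ C := by positivity
  have hgcbound : ∀ (N : ℕ) (m : ℤ), ‖phi Q N * gc Q N m‖ ≤ C := by
    intro N m
    rcases le_or_gt (m.natAbs : ℤ) (N : ℤ) with hcase | hcase
    · rw [gc_ofNat Q N m (((N:ℤ)+m).toNat) (((N:ℤ)-m).toNat) (by omega) (by omega),
        norm_mul, norm_div, norm_mul]
      rw [hCdef, show B * B / (ε * ε) = B * (B / (ε * ε)) from mul_div_assoc _ _ _]
      have d1 := (hb (((N:ℤ)+m).toNat)).1
      have d2 := (hb (((N:ℤ)-m).toNat)).1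
      apply mul_le_mul (hb N).2 ?_ (by positivity) hB0.le
      apply div_le_div₀ hB0.le (hb (2*N)).2 (by positivity)
      exact mul_le_mul d1 d2 hε.le (le_trans hε.le d1)
    · rw [gc_eq_zero Q (by omega), mul_zero, norm_zero]
      exact hC0
  have hbound : ∀ (N : ℕ) (m : ℤ),
      ‖phi Q N * gc Q N m * (q ^ (m^2) * w ^ m)‖
        ≤ C * (r ^ (m.natAbs ^ 2) * s ^ m.natAbs) := by
    intro N m
    rw [norm_mul]
    apply mul_le_mul (hgcbound N m) ?_ (norm_nonneg _) hC0
    rw [norm_mul, norm_zpow, norm_zpow]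
    have e1 : ‖q‖ ^ ((m^2 : ℤ)) = r ^ (m.natAbs ^ 2) := by
      rw [show (m^2 : ℤ) = ((m.natAbs ^ 2 : ℕ) : ℤ) by
          rw [← Int.natAbs_pow]; exact (Int.natAbs_of_nonneg (by positivity)).symm,
        zpow_natCast]
    have e2 : ‖w‖ ^ (m : ℤ) ≤ s ^ m.natAbs := by
      rcases le_or_gt 0 m with hm | hm
      · obtain ⟨k, rfl⟩ : ∃ k : ℕ, m = (k:ℤ) := ⟨m.toNat, by omega⟩
        rw [zpow_natCast, Int.natAbs_natCast]
        exact pow_le_pow_left₀ (norm_nonneg _) (le_max_left _ _) _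
      · obtain ⟨k, rfl⟩ : ∃ k : ℕ, m = -(k:ℤ) := ⟨m.natAbs, by omega⟩
        rw [zpow_neg, zpow_natCast, ← inv_pow, ← norm_inv,
          show ((-(k:ℤ)).natAbs) = k by omega]
        exact pow_le_pow_left₀ (norm_nonneg _) (le_max_right _ _) _
    rw [e1]
    apply mul_le_mul le_rfl e2 ?_ (by positivity)
    positivity
  -- dominated convergence
  have hDC : Tendsto (fun N : ℕ => ∑' m : ℤ, (phi Q N * gc Q N m * (q ^ (m^2) * w ^ m)))
      atTop (𝓝 (∑' m : ℤ, q ^ (m^2) * w ^ m)) := by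
    apply tendsto_tsum_of_dominated_convergence
      ((summable_theta_bound r s hr0 hr1 hs0).mul_left C)
    · intro m
      have := (hd m).mul_const (q ^ (m^2) * w ^ m)
      simpa using this
    · exact Filter.Eventually.of_forall (fun N => hbound N)
  -- the finite product equals the partial theta sum
  have hcos : 2 * Complex.cos (2*z) = w + w⁻¹ := by
    have e1 : Complex.exp (2*z*Complex.I) = w := by rw [hwdef]; congr 1; ring
    have e2 : Complex.exp (-(2*z)*Complex.I) = w⁻¹ := by
      rw [hwdef, ← Complex.exp_neg]; congr 1; ring
    rw [Complex.cos, e1, e2]; ring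
  have hFS : ∀ N : ℕ,
      (∏ j ∈ Finset.range N, ((1 - q^(2*j+2)) * (1 + 2*q^(2*j+1)*Complex.cos (2*z) + q^(4*j+2))))
        = ∑' m : ℤ, (phi Q N * gc Q N m * (q ^ (m^2) * w ^ m)) := by
    intro N
    have hsupp : ∀ m ∉ Finset.Icc (-(N:ℤ)) (N:ℤ),
        phi Q N * gc Q N m * (q ^ (m^2) * w ^ m) = 0 := by
      intro m hm
      rw [Finset.mem_Icc] at hm
      rw [gc_eq_zero Q (by omega), mul_zero, zero_mul]
    rw [tsum_eq_sum hsupp]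
    have hpair : ∀ j : ℕ, (1 - q^(2*j+2)) * (1 + 2*q^(2*j+1)*Complex.cos (2*z) + q^(4*j+2))
        = (1 - Q^(j+1)) * ((1 + q^(2*j+1)*w) * (1 + q^(2*j+1)*w⁻¹)) := by
      intro j
      have h1 : (1 + q^(2*j+1)*w) * (1 + q^(2*j+1)*w⁻¹)
          = 1 + q^(2*j+1)*(w + w⁻¹) + q^(4*j+2) := by
        have hww : w * w⁻¹ = 1 := mul_inv_cancel₀ hw0
        have : (1 + q^(2*j+1)*w) * (1 + q^(2*j+1)*w⁻¹)
            = 1 + q^(2*j+1)*(w + w⁻¹) + (q^(2*j+1))^2 * (w * w⁻¹) := by ring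
        rw [this, hww, mul_one, ← pow_mul, show (2*j+1)*2 = 4*j+2 by ring]
      have h2 : (1:ℂ) - Q^(j+1) = 1 - q^(2*j+2) := by
        rw [hQdef, ← pow_mul, show 2*(j+1) = 2*j+2 by ring]
      rw [h1, ← hcos, h2]
      ring
    rw [Finset.prod_congr rfl (fun j _ => hpair j), Finset.prod_mul_distrib]
    rw [show (∏ j ∈ Finset.range N, ((1:ℂ) - Q^(j+1))) = phi Q N from rfl]
    rw [finite_jtp q w hq hw0 (by rw [← hQdef]; exact hQ) N, Finset.mul_sum]
    apply Finset.sum_congr rfl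
    intro m _
    rw [hQdef]
    ring
  have hTendF : Tendsto (fun N : ℕ => ∏ j ∈ Finset.range N,
      ((1 - q^(2*j+2)) * (1 + 2*q^(2*j+1)*Complex.cos (2*z) + q^(4*j+2))))
      atTop (𝓝 (∑' m : ℤ, q ^ (m^2) * w ^ m)) := by
    apply hDC.congr
    intro N
    exact (hFS N).symm
  -- now identify the tprod
  by_cases hall : ∀ n : ℕ,
      (1 - q^(2*n+2)) * (1 + 2*q^(2*n+1)*Complex.cos (2*z) + q^(4*n+2)) ≠ 0
  · set f : ℕ → ℂ := fun n =>
      (1 - q^(2*n+2)) * (1 + 2*q^(2*n+1)*Complex.cos (2*z) + q^(4*n+2)) - 1 with hfdef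
    set M : ℝ := ‖Complex.cos (2*z)‖ with hMdef
    have hM0 : 0 ≤ M := norm_nonneg _
    have hfs : Summable fun n => ‖f n‖ := by
      have hgeo : Summable (fun n : ℕ => r ^ (2*n+1)) := by
        have := (summable_geometric_of_lt_one hr0.le hr1).comp_injective
          (i := fun n : ℕ => 2*n+1) (fun a b hab => by dsimp at hab; omega)
        exact this
      refine Summable.of_nonneg_of_le (fun n => norm_nonneg _) ?_ (hgeo.mul_left (4*M+3))
      intro n
      have hu : ‖q^(2*n+2)‖ ≤ r ^ (2*n+1) := by
        rw [norm_pow]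
        exact pow_le_pow_of_le_one hr0.le hr1.le (by omega)
      have hu1 : ‖q^(2*n+2)‖ ≤ 1 := by
        rw [norm_pow]
        exact pow_le_one₀ hr0.le hr1.le
      have hv : ‖2*q^(2*n+1)*Complex.cos (2*z) + q^(4*n+2)‖ ≤ (2*M+1) * r ^ (2*n+1) := by
        calc ‖2*q^(2*n+1)*Complex.cos (2*z) + q^(4*n+2)‖
            ≤ ‖2*q^(2*n+1)*Complex.cos (2*z)‖ + ‖q^(4*n+2)‖ := norm_add_le _ _
          _ ≤ 2 * r^(2*n+1) * M + r^(2*n+1) := by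
              apply add_le_add
              · rw [norm_mul, norm_mul, norm_pow]
                simp only [Complex.norm_ofNat]
                exact le_of_eq (by rw [hMdef])
              · rw [norm_pow]
                exact pow_le_pow_of_le_one hr0.le hr1.le (by omega)
          _ = (2*M+1) * r^(2*n+1) := by ring
      have hfform : f n = (2*q^(2*n+1)*Complex.cos (2*z) + q^(4*n+2)) - q^(2*n+2)
          - q^(2*n+2) * (2*q^(2*n+1)*Complex.cos (2*z) + q^(4*n+2)) := by
        rw [hfdef]; ring
      calc ‖f n‖ ≤ ‖(2*q^(2*n+1)*Complex.cos (2*z) + q^(4*n+2)) - q^(2*n+2)‖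
            + ‖q^(2*n+2) * (2*q^(2*n+1)*Complex.cos (2*z) + q^(4*n+2))‖ := by
            rw [hfform]; exact norm_sub_le _ _
        _ ≤ (‖2*q^(2*n+1)*Complex.cos (2*z) + q^(4*n+2)‖ + ‖q^(2*n+2)‖)
            + ‖q^(2*n+2)‖ * ‖2*q^(2*n+1)*Complex.cos (2*z) + q^(4*n+2)‖ := by
            apply add_le_add (norm_sub_le _ _)
            rw [norm_mul]
        _ ≤ ((2*M+1) * r^(2*n+1) + r^(2*n+1)) + 1 * ((2*M+1) * r^(2*n+1)) := by
            apply add_le_add (add_le_add hv hu)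
            exact mul_le_mul hu1 hv (norm_nonneg _) (by norm_num)
        _ = (4*M+3) * r^(2*n+1) := by ring
    have hne : ∀ n : ℕ, (1:ℂ) + f n ≠ 0 := by
      intro n
      rw [hfdef]
      simpa using hall n
    obtain ⟨hPf, _⟩ := hasProd_aux hfs hne
    have hcomb : (fun n : ℕ => 1 + f n)
        = fun n : ℕ => ((1 - q^(2*n+2)) * (1 + 2*q^(2*n+1)*Complex.cos (2*z) + q^(4*n+2))) := by
      funext n; rw [hfdef]; ring
    rw [hcomb] at hPf
    have := hPf.tendsto_prod_nat
    exact (tendsto_nhds_unique hTendF this).trans (by norm_num)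
  · push_neg at hall
    obtain ⟨n₀, hn₀⟩ := hall
    have hP0 : HasProd (fun n : ℕ =>
        ((1 - q^(2*n+2)) * (1 + 2*q^(2*n+1)*Complex.cos (2*z) + q^(4*n+2)))) 0 := by
      rw [HasProd]
      apply tendsto_const_nhds.congr'
      filter_upwards [eventually_ge_atTop ({n₀} : Finset ℕ)] with t ht
      exact (Finset.prod_eq_zero (ht (Finset.mem_singleton_self n₀)) hn₀).symm
    have hzero : ∀ᶠ N : ℕ in atTop, (∏ j ∈ Finset.range N,
        ((1 - q^(2*j+2)) * (1 + 2*q^(2*j+1)*Complex.cos (2*z) + q^(4*j+2)))) = (0:ℂ) := by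
      filter_upwards [eventually_ge_atTop (n₀+1)] with N hN
      exact Finset.prod_eq_zero (Finset.mem_range.2 (by omega)) hn₀
    have hF0 : Tendsto (fun N : ℕ => ∏ j ∈ Finset.range N,
        ((1 - q^(2*j+2)) * (1 + 2*q^(2*j+1)*Complex.cos (2*z) + q^(4*j+2))))
        atTop (𝓝 (0:ℂ)) :=
      tendsto_const_nhds.congr' (by filter_upwards [hzero] with N hN; exact hN.symm)
    rw [tendsto_nhds_unique hTendF hF0, hP0.tprod_eq]
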